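/- Let m ≥ 1 and let ν be a partition of n ≥ 1 with conjugate ν', largest part ℓ = ν_1, and exactly k nonzero parts. For 1 ≤ i ≤ ℓ let P_i be the set family { {1, 2, …, m−1} ∪ {m−1+j} : 1 ≤ j ≤ ν'_i }. Then (P_1,…,P_ℓ) is a closed set family tuple with each P_i of shape (m^{ν'_i}); its type λ is defined and its conjugate is λ' = (n^{m−1}, ν_1, ν_2, …, ν_k), i.e. the total number of sets containing x is n for 1 ≤ x ≤ m−1 and is ν_j for x = m−1+j with 1 ≤ j ≤ k. Moreover, for every set family tuple (R_1,…,R_ℓ) with each R_i of shape (m^{ν'_i}) whose type μ is defined, the conjugate μ' is lexicographically at most (n^{m−1}, ν_1, ν_2, …, ν_k). -/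

import Mathlib

/-- The multiplicity of `i` in a set family `P`: the number of sets in `P` containing `i`. -/
def famMult (P : Finset (Finset ℕ)) (i : ℕ) : ℕ := (P.filter fun S => i ∈ S).card

/-- `P` is a set family of shape `(m^n)`: a collection of `n` distinct `m`-subsets of
the positive integers. -/
def IsSetFamily (m n : ℕ) (P : Finset (Finset ℕ)) : Prop :=
  P.card = n ∧ ∀ S ∈ P, S.card = m ∧ ∀ x ∈ S, 1 ≤ x

/-- `B` majorizes `A` (written `A ⪯ B`): the `r`-th smallest element of `A` is at most
the `r`-th smallest element of `B` (the sets in question have the same cardinality). -/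
def SetMaj (A B : Finset ℕ) : Prop :=
  ∀ r : ℕ, (A.sort (· ≤ ·)).getD r 0 ≤ (B.sort (· ≤ ·)).getD r 0

/-- A set family (of `m`-subsets) is closed if it is downward closed under majorization. -/
def ClosedFam (m : ℕ) (P : Finset (Finset ℕ)) : Prop :=
  ∀ B ∈ P, ∀ A : Finset ℕ, A.card = m → (∀ x ∈ A, 1 ≤ x) → SetMaj A B → A ∈ P

/-- The type of a family (or tuple) whose multiplicity function is `f` is defined exactly
when `f` is weakly decreasing on the positive integers; then `f` is the conjugate `λ'`
of the type `λ`. -/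
def TypeDefined (f : ℕ → ℕ) : Prop := ∀ i j : ℕ, 1 ≤ i → i ≤ j → f j ≤ f i

/-- The sum of the first `j` parts of the partition `λ` whose conjugate is `f`:
`λ_1 + ⋯ + λ_j = Σ_x min (λ'_x) j`. -/
noncomputable def partSum (f : ℕ → ℕ) (j : ℕ) : ℕ := ∑ᶠ x, min (f x) j

/-- Dominance order: the partition with conjugate `g` is dominated (`⊴`) by the partition
with conjugate `f`. -/
def ConjDom (g f : ℕ → ℕ) : Prop := ∀ j : ℕ, partSum g j ≤ partSum f j

/-- Strict dominance `⊲` of the partition with conjugate `g` by the one with conjugate `f`. -/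
def ConjStrictDom (g f : ℕ → ℕ) : Prop := ConjDom g f ∧ ∃ i : ℕ, 1 ≤ i ∧ g i ≠ f i

/-- The total multiplicity of `i` over a tuple of set families. -/
def tupMult {k : ℕ} (P : Fin k → Finset (Finset ℕ)) (i : ℕ) : ℕ := ∑ j, famMult (P j) i

/-- The conjugate of the partition `ν` (with at most `k` parts): `ν'_i = #{j ≤ k : ν_j ≥ i}`. -/
def nuConj (k : ℕ) (nu : ℕ → ℕ) (i : ℕ) : ℕ := ((Finset.Icc 1 k).filter fun j => i ≤ nu j).card

/-- The set family `{ {1,…,m-1} ∪ {m-1+j} : 1 ≤ j ≤ c }`. -/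
def hookFam (m c : ℕ) : Finset (Finset ℕ) :=
  (Finset.Icc 1 c).image fun j => insert (m - 1 + j) (Finset.Icc 1 (m - 1))

/-- The total multiplicity of `x` over the tuple `(P_1, …, P_ℓ)`. -/
def tupMultIcc (l : ℕ) (P : ℕ → Finset (Finset ℕ)) (x : ℕ) : ℕ :=
  ∑ i ∈ Finset.Icc 1 l, famMult (P i) x

/-! ### Auxiliary lemmas -/

lemma sorted_getD_ge (c : ℕ) : ∀ (l : List ℕ), l.Pairwise (· < ·) → (∀ x ∈ l, c ≤ x) →
    ∀ r, r < l.length → c + r ≤ l.getD r 0 := by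
  intro l
  induction l generalizing c with
  | nil => intro _ _ r hr; simp at hr
  | cons a t ih =>
    intro hs hc r hr
    cases r with
    | zero => simpa using hc a (by simp)
    | succ r =>
      have ht : t.Pairwise (· < ·) := hs.of_cons
      have hc' : ∀ x ∈ t, c + 1 ≤ x := fun x hx =>
        Nat.succ_le_of_lt (lt_of_le_of_lt (hc a (by simp)) (List.rel_of_pairwise_cons hs hx))
      have := ih (c + 1) ht hc' r (by simpa using hr)
      simpa [Nat.add_comm, Nat.add_assoc, Nat.add_left_comm] using this

lemma sort_hook (m y : ℕ) (hy : m ≤ y) :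
    (insert y (Finset.Icc 1 (m-1))).sort (· ≤ ·) = List.range' 1 (m-1) ++ [y] := by
  have hfin : (List.range' 1 (m-1) ++ [y]).toFinset = insert y (Finset.Icc 1 (m-1)) := by
    ext x
    simp only [List.toFinset_append, Finset.mem_union, List.mem_toFinset, List.mem_range'_1,
      List.mem_singleton, Finset.mem_insert, Finset.mem_Icc, List.toFinset_cons,
      List.toFinset_nil, insert_empty_eq, Finset.mem_singleton]
    omega
  have hnd : (List.range' 1 (m-1) ++ [y]).Nodup := by
    refine List.Nodup.append (List.nodup_range' ..) (List.nodup_singleton y) ?_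
    intro a ha hb
    simp only [List.mem_singleton] at hb
    subst hb
    have := List.mem_range'_1.1 ha
    omega
  have hsort : (List.range' 1 (m-1) ++ [y]).Pairwise (· ≤ ·) := by
    rw [List.pairwise_append]
    refine ⟨(List.pairwise_lt_range' ..).imp le_of_lt, by simp, ?_⟩
    intro a ha b hb
    simp only [List.mem_singleton] at hb
    subst hb
    have := List.mem_range'_1.1 ha
    omega
  rw [← hfin, List.toFinset_sort _ hnd]
  exact hsort

lemma hook_getD_low (m y r : ℕ) (hy : m ≤ y) (hr : r < m - 1) :
    ((insert y (Finset.Icc 1 (m-1))).sort (· ≤ ·)).getD r 0 = r + 1 := by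
  rw [sort_hook m y hy]
  rw [List.getD_eq_getElem _ _ (by simp [List.length_range']; omega)]
  rw [List.getElem_append]
  rw [dif_pos (by simp [List.length_range']; omega)]
  rw [List.getElem_range'_1]
  omega

lemma hook_getD_top (m y : ℕ) (hy : m ≤ y) :
    ((insert y (Finset.Icc 1 (m-1))).sort (· ≤ ·)).getD (m-1) 0 = y := by
  rw [sort_hook m y hy]
  rw [List.getD_eq_getElem _ _ (by simp [List.length_range'])]
  rw [List.getElem_append]
  rw [dif_neg (by simp [List.length_range'])]
  simp [List.length_range']

lemma top_not_mem_base {m j : ℕ} (hj : 1 ≤ j) : m - 1 + j ∉ Finset.Icc 1 (m - 1) := by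
  simp only [Finset.mem_Icc]; omega

lemma mem_hookFam {m c : ℕ} {S : Finset ℕ} :
    S ∈ hookFam m c ↔ ∃ j, (1 ≤ j ∧ j ≤ c) ∧ S = insert (m - 1 + j) (Finset.Icc 1 (m - 1)) := by
  simp [hookFam, Finset.mem_image, Finset.mem_Icc, eq_comm]

lemma card_hookFam (m c : ℕ) : (hookFam m c).card = c := by
  rw [hookFam, Finset.card_image_of_injOn, Nat.card_Icc]
  · omega
  · intro a ha b hb hab
    simp only [Finset.coe_Icc, Set.mem_Icc] at ha hb
    have hab' : insert (m - 1 + a) (Finset.Icc 1 (m - 1))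
        = insert (m - 1 + b) (Finset.Icc 1 (m - 1)) := hab
    have : m - 1 + a ∈ insert (m - 1 + b) (Finset.Icc 1 (m - 1)) := by
      rw [← hab']; exact Finset.mem_insert_self _ _
    rcases Finset.mem_insert.1 this with h | h
    · omega
    · exact absurd h (top_not_mem_base ha.1)

lemma isSetFamily_hookFam (m c : ℕ) (hm : 1 ≤ m) : IsSetFamily m c (hookFam m c) := by
  refine ⟨card_hookFam m c, ?_⟩
  intro S hS
  obtain ⟨j, ⟨hj1, _⟩, rfl⟩ := mem_hookFam.1 hS
  constructor
  · rw [Finset.card_insert_of_notMem (top_not_mem_base hj1), Nat.card_Icc]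
    omega
  · intro x hx
    rcases Finset.mem_insert.1 hx with h | h
    · omega
    · exact (Finset.mem_Icc.1 h).1

lemma closed_hookFam (m c : ℕ) (hm : 1 ≤ m) : ClosedFam m (hookFam m c) := by
  intro B hB A hAcard hApos hmaj
  obtain ⟨j, ⟨hj1, hjc⟩, rfl⟩ := mem_hookFam.1 hB
  have hyB : m ≤ m - 1 + j := by omega
  set lA := A.sort (· ≤ ·) with hlA
  have hlen : lA.length = m := by rw [hlA, Finset.length_sort, hAcard]
  have hlow : ∀ r, r < m → r + 1 ≤ lA.getD r 0 := by
    intro r hr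
    have := sorted_getD_ge 1 lA (List.sortedLT_iff_pairwise.1 (Finset.sortedLT_sort A))
      (fun x hx => hApos x ((Finset.mem_sort _).1 hx)) r (by omega)
    omega
  have hmem : ∀ r, r < m → lA.getD r 0 ∈ A := by
    intro r hr
    have hrl : r < lA.length := by omega
    rw [lA.getD_eq_getElem 0 hrl]
    exact (Finset.mem_sort _).1 (lA.getElem_mem hrl)
  have hbase : Finset.Icc 1 (m - 1) ⊆ A := by
    intro x hx
    rw [Finset.mem_Icc] at hx
    have hxr : x - 1 < m - 1 := by omega
    have h1 := hmaj (x - 1)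
    rw [hook_getD_low m (m - 1 + j) (x - 1) hyB hxr, ← hlA] at h1
    have h2 := hlow (x - 1) (by omega)
    have : lA.getD (x - 1) 0 = x := by omega
    rw [← this]
    exact hmem (x - 1) (by omega)
  set y := lA.getD (m - 1) 0 with hy
  have hymem : y ∈ A := hmem (m - 1) (by omega)
  have hyge : m ≤ y := by have := hlow (m - 1) (by omega); omega
  have hyle : y ≤ m - 1 + j := by
    have h1 := hmaj (m - 1)
    rwa [hook_getD_top m (m - 1 + j) hyB, ← hlA] at h1
  have hsub : insert y (Finset.Icc 1 (m - 1)) ⊆ A := by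
    intro x hx
    rcases Finset.mem_insert.1 hx with h | h
    · exact h ▸ hymem
    · exact hbase h
  have hynb : y ∉ Finset.Icc 1 (m - 1) := by simp only [Finset.mem_Icc]; omega
  have hcard : (insert y (Finset.Icc 1 (m - 1))).card = m := by
    rw [Finset.card_insert_of_notMem hynb, Nat.card_Icc]; omega
  have hAeq : A = insert y (Finset.Icc 1 (m - 1)) :=
    (Finset.eq_of_subset_of_card_le hsub (by omega)).symm
  rw [mem_hookFam]
  exact ⟨y - (m - 1), ⟨by omega, by omega⟩, by rw [hAeq]; congr 1; omega⟩

section NuLemmas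

variable {k : ℕ} {nu : ℕ → ℕ}

lemma nuConj_iff (hmono : ∀ i j : ℕ, 1 ≤ i → i ≤ j → nu j ≤ nu i)
    (hzero : ∀ i : ℕ, k < i → nu i = 0) {i j : ℕ} (hi : 1 ≤ i) (hj : 1 ≤ j) :
    j ≤ nuConj k nu i ↔ i ≤ nu j := by
  constructor
  · intro h
    by_contra hni
    push_neg at hni
    have hsub : (Finset.Icc 1 k).filter (fun t => i ≤ nu t) ⊆ Finset.Icc 1 (j - 1) := by
      intro t ht
      rw [Finset.mem_filter, Finset.mem_Icc] at ht
      rw [Finset.mem_Icc]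
      refine ⟨ht.1.1, ?_⟩
      by_contra htj
      push_neg at htj
      have := hmono j t hj (by omega)
      omega
    have := Finset.card_le_card hsub
    rw [Nat.card_Icc] at this
    unfold nuConj at h
    omega
  · intro h
    have hjk : j ≤ k := by
      by_contra hjk
      push_neg at hjk
      have := hzero j hjk
      omega
    have hsub : Finset.Icc 1 j ⊆ (Finset.Icc 1 k).filter (fun t => i ≤ nu t) := by
      intro t ht
      rw [Finset.mem_Icc] at ht
      rw [Finset.mem_filter, Finset.mem_Icc]
      exact ⟨⟨ht.1, le_trans ht.2 hjk⟩, le_trans h (hmono t j ht.1 ht.2)⟩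
    have := Finset.card_le_card hsub
    rw [Nat.card_Icc] at this
    unfold nuConj
    omega

lemma filter_le_Icc (c t : ℕ) :
    (Finset.Icc 1 t).filter (fun j => j ≤ c) = Finset.Icc 1 (min c t) := by
  ext x
  simp only [Finset.mem_filter, Finset.mem_Icc]
  omega

lemma conj_partial_sum (hmono : ∀ i j : ℕ, 1 ≤ i → i ≤ j → nu j ≤ nu i)
    (hzero : ∀ i : ℕ, k < i → nu i = 0) (t : ℕ) :
    ∑ i ∈ Finset.Icc 1 (nu 1), min (nuConj k nu i) t = ∑ j ∈ Finset.Icc 1 t, nu j := by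
  have step1 : ∀ i ∈ Finset.Icc 1 (nu 1),
      min (nuConj k nu i) t = ((Finset.Icc 1 t).filter (fun j => i ≤ nu j)).card := by
    intro i hi
    rw [Finset.mem_Icc] at hi
    have : (Finset.Icc 1 t).filter (fun j => i ≤ nu j)
        = (Finset.Icc 1 t).filter (fun j => j ≤ nuConj k nu i) := by
      apply Finset.filter_congr
      intro j hj
      rw [Finset.mem_Icc] at hj
      exact (nuConj_iff hmono hzero hi.1 hj.1).symm
    rw [this, filter_le_Icc, Nat.card_Icc]
    omega
  rw [Finset.sum_congr rfl step1]
  have step2 : ∀ i ∈ Finset.Icc 1 (nu 1),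
      ((Finset.Icc 1 t).filter (fun j => i ≤ nu j)).card
        = ∑ j ∈ Finset.Icc 1 t, if i ≤ nu j then 1 else 0 := by
    intro i _
    rw [Finset.card_filter]
  rw [Finset.sum_congr rfl step2, Finset.sum_comm]
  apply Finset.sum_congr rfl
  intro j hj
  rw [Finset.mem_Icc] at hj
  have : ∑ i ∈ Finset.Icc 1 (nu 1), (if i ≤ nu j then (1:ℕ) else 0)
      = ((Finset.Icc 1 (nu 1)).filter (fun i => i ≤ nu j)).card := by
    rw [Finset.card_filter]
  rw [this, filter_le_Icc, Nat.card_Icc]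
  have := hmono 1 j (le_refl 1) hj.1
  omega

lemma nuConj_le (i : ℕ) : nuConj k nu i ≤ k := by
  have := Finset.card_le_card (Finset.filter_subset (fun j => i ≤ nu j) (Finset.Icc 1 k))
  rw [Nat.card_Icc] at this
  unfold nuConj
  omega

lemma sum_nuConj (hmono : ∀ i j : ℕ, 1 ≤ i → i ≤ j → nu j ≤ nu i)
    (hzero : ∀ i : ℕ, k < i → nu i = 0) :
    ∑ i ∈ Finset.Icc 1 (nu 1), nuConj k nu i = ∑ j ∈ Finset.Icc 1 k, nu j := by
  have := conj_partial_sum hmono hzero k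
  rw [← this]
  apply Finset.sum_congr rfl
  intro i _
  exact (min_eq_left (nuConj_le i)).symm

end NuLemmas

/-- Let `ν` be a partition of `n ≥ 1` with largest part `ℓ = ν_1` and
exactly `k` nonzero parts, `m ≥ 1`.  With `P_i = hookFam m (ν'_i)` for `1 ≤ i ≤ ℓ`,
`(P_1,…,P_ℓ)` is a closed set family tuple, each `P_i` of shape `(m^{ν'_i})`; its type `λ`
is defined with conjugate `λ' = (n^{m-1}, ν_1, …, ν_k)`: the total number of sets
containing `x` is `n` for `1 ≤ x ≤ m-1` and is `ν_j` for `x = m-1+j`, `j ≥ 1`; and the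
conjugate of the defined type of any set family tuple of the same shapes is
lexicographically at most `λ'`. -/
theorem stmt_18 (m n k : ℕ) (hm : 1 ≤ m) (hn : 1 ≤ n) (nu : ℕ → ℕ)
    (hmono : ∀ i j : ℕ, 1 ≤ i → i ≤ j → nu j ≤ nu i)
    (hpos : ∀ i : ℕ, 1 ≤ i → i ≤ k → 0 < nu i)
    (hzero : ∀ i : ℕ, k < i → nu i = 0)
    (hsum : (∑ i ∈ Finset.Icc 1 k, nu i) = n) :
    (∀ i : ℕ, 1 ≤ i → i ≤ nu 1 →
      IsSetFamily m (nuConj k nu i) (hookFam m (nuConj k nu i)) ∧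
      ClosedFam m (hookFam m (nuConj k nu i))) ∧
    TypeDefined (tupMultIcc (nu 1) fun i => hookFam m (nuConj k nu i)) ∧
    (∀ x : ℕ, 1 ≤ x → x ≤ m - 1 →
      (tupMultIcc (nu 1) fun i => hookFam m (nuConj k nu i)) x = n) ∧
    (∀ j : ℕ, 1 ≤ j →
      (tupMultIcc (nu 1) fun i => hookFam m (nuConj k nu i)) (m - 1 + j) = nu j) ∧
    (∀ R : ℕ → Finset (Finset ℕ),
      (∀ i : ℕ, 1 ≤ i → i ≤ nu 1 → IsSetFamily m (nuConj k nu i) (R i)) →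
      TypeDefined (tupMultIcc (nu 1) R) →
      ((∀ i : ℕ, 1 ≤ i →
          tupMultIcc (nu 1) R i = (tupMultIcc (nu 1) fun i => hookFam m (nuConj k nu i)) i) ∨
        ∃ j : ℕ, 1 ≤ j ∧
          tupMultIcc (nu 1) R j < (tupMultIcc (nu 1) fun i => hookFam m (nuConj k nu i)) j ∧
          ∀ i : ℕ, 1 ≤ i → i < j →
            tupMultIcc (nu 1) R i
              = (tupMultIcc (nu 1) fun i => hookFam m (nuConj k nu i)) i)) := by
  -- basic facts
  have hk1 : 1 ≤ k := by
    by_contra h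
    push_neg at h
    interval_cases k
    simp at hsum
    omega
  have hnu1n : nu 1 ≤ n := by
    rw [← hsum]
    exact Finset.single_le_sum (fun i _ => Nat.zero_le _) (by rw [Finset.mem_Icc]; omega)
  have hnule : ∀ j, 1 ≤ j → nu j ≤ n := fun j hj => le_trans (hmono 1 j le_rfl hj) hnu1n
  set F := tupMultIcc (nu 1) fun i => hookFam m (nuConj k nu i) with hF
  -- multiplicity of hookFam
  have hfml : ∀ c x, 1 ≤ x → x ≤ m - 1 → famMult (hookFam m c) x = c := by
    intro c x hx1 hx2
    unfold famMult
    have : (hookFam m c).filter (fun S => x ∈ S) = hookFam m c := by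
      apply Finset.filter_true_of_mem
      intro S hS
      obtain ⟨j, ⟨hj1, _⟩, rfl⟩ := mem_hookFam.1 hS
      exact Finset.mem_insert_of_mem (Finset.mem_Icc.2 ⟨hx1, hx2⟩)
    rw [this, card_hookFam]
  have hfmh : ∀ c j, 1 ≤ j →
      famMult (hookFam m c) (m - 1 + j) = if j ≤ c then 1 else 0 := by
    intro c j hj
    unfold famMult hookFam
    rw [Finset.filter_image]
    have : (Finset.Icc 1 c).filter
        (fun a => m - 1 + j ∈ insert (m - 1 + a) (Finset.Icc 1 (m - 1)))
        = (Finset.Icc 1 c).filter (fun a => a = j) := by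
      apply Finset.filter_congr
      intro a ha
      rw [Finset.mem_Icc] at ha
      simp only [Finset.mem_insert, Finset.mem_Icc]
      omega
    rw [this]
    by_cases hjc : j ≤ c
    · have : (Finset.Icc 1 c).filter (fun a => a = j) = {j} := by
        ext a
        simp only [Finset.mem_filter, Finset.mem_Icc, Finset.mem_singleton]
        omega
      rw [this, if_pos hjc]
      simp
    · have : (Finset.Icc 1 c).filter (fun a => a = j) = ∅ := by
        ext a
        simp only [Finset.mem_filter, Finset.mem_Icc, Finset.notMem_empty, iff_false]
        omega
      rw [this, if_neg hjc]
      simp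
  -- part 3
  have part3 : ∀ x : ℕ, 1 ≤ x → x ≤ m - 1 → F x = n := by
    intro x hx1 hx2
    rw [hF]
    unfold tupMultIcc
    calc ∑ i ∈ Finset.Icc 1 (nu 1), famMult (hookFam m (nuConj k nu i)) x
        = ∑ i ∈ Finset.Icc 1 (nu 1), nuConj k nu i :=
          Finset.sum_congr rfl (fun i _ => hfml _ x hx1 hx2)
      _ = n := by rw [sum_nuConj hmono hzero, hsum]
  -- part 4
  have part4 : ∀ j : ℕ, 1 ≤ j → F (m - 1 + j) = nu j := by
    intro j hj
    rw [hF]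
    unfold tupMultIcc
    calc ∑ i ∈ Finset.Icc 1 (nu 1), famMult (hookFam m (nuConj k nu i)) (m - 1 + j)
        = ∑ i ∈ Finset.Icc 1 (nu 1), if j ≤ nuConj k nu i then 1 else 0 :=
          Finset.sum_congr rfl (fun i _ => hfmh _ j hj)
      _ = ((Finset.Icc 1 (nu 1)).filter (fun i => j ≤ nuConj k nu i)).card :=
          (Finset.card_filter _ _).symm
      _ = nu j := by
          have : (Finset.Icc 1 (nu 1)).filter (fun i => j ≤ nuConj k nu i)
              = (Finset.Icc 1 (nu 1)).filter (fun i => i ≤ nu j) := by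
            apply Finset.filter_congr
            intro i hi
            rw [Finset.mem_Icc] at hi
            exact nuConj_iff hmono hzero hi.1 hj
          rw [this, filter_le_Icc, Nat.card_Icc]
          have := hmono 1 j le_rfl hj
          omega
  refine ⟨?_, ?_, part3, part4, ?_⟩
  · exact fun i hi1 hi2 =>
      ⟨isSetFamily_hookFam m _ hm, closed_hookFam m _ hm⟩
  · -- TypeDefined
    intro i j hi hij
    by_cases hjm : j ≤ m - 1
    · rw [part3 i hi (by omega), part3 j (by omega) hjm]
    · push_neg at hjm
      have hj' : j = m - 1 + (j - (m - 1)) := by omega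
      rw [hj', part4 (j - (m - 1)) (by omega)]
      by_cases him : i ≤ m - 1
      · rw [part3 i hi him]
        exact hnule _ (by omega)
      · push_neg at him
        have hi' : i = m - 1 + (i - (m - 1)) := by omega
        rw [hi', part4 (i - (m - 1)) (by omega)]
        exact hmono _ _ (by omega) (by omega)
  · -- part 5
    intro R hR _
    set G := tupMultIcc (nu 1) R with hG
    by_cases hall : ∀ i, 1 ≤ i → G i = F i
    · left; exact hall
    right
    push_neg at hall
    have hex : ∃ j, 1 ≤ j ∧ G j ≠ F j := hall
    classical
    set j₀ := Nat.find hex with hj₀def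
    obtain ⟨hj₀1, hj₀ne⟩ := Nat.find_spec hex
    rw [← hj₀def] at hj₀1 hj₀ne
    have hmin : ∀ i, 1 ≤ i → i < j₀ → G i = F i := by
      intro i hi hij
      by_contra hne
      have h := Nat.find_min hex (m := i) (by omega)
      exact h ⟨hi, hne⟩
    refine ⟨j₀, hj₀1, ?_, hmin⟩
    -- suffices G j₀ ≤ F j₀
    have hcard : ∀ i ∈ Finset.Icc 1 (nu 1), (R i).card = nuConj k nu i := by
      intro i hi
      rw [Finset.mem_Icc] at hi
      exact (hR i hi.1 hi.2).1
    have hsize : ∀ i ∈ Finset.Icc 1 (nu 1), ∀ S ∈ R i, S.card = m ∧ ∀ x ∈ S, 1 ≤ x := by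
      intro i hi
      rw [Finset.mem_Icc] at hi
      exact (hR i hi.1 hi.2).2
    have hsumcard : ∑ i ∈ Finset.Icc 1 (nu 1), (R i).card = n := by
      rw [Finset.sum_congr rfl hcard, sum_nuConj hmono hzero, hsum]
    have hGle : G j₀ ≤ F j₀ := by
      by_cases hc : j₀ ≤ m - 1
      · rw [part3 j₀ hj₀1 hc, hG]
        unfold tupMultIcc
        rw [← hsumcard]
        exact Finset.sum_le_sum (fun i _ => Finset.card_filter_le _ _)
      · push_neg at hc
        set t := j₀ - (m - 1) with ht
        have ht1 : 1 ≤ t := by omega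
        have hj₀eq : j₀ = m - 1 + t := by omega
        -- every set in every R i contains Icc 1 (m-1)
        have hbase : ∀ i ∈ Finset.Icc 1 (nu 1), ∀ S ∈ R i, Finset.Icc 1 (m - 1) ⊆ S := by
          intro i hi S hS x hx
          rw [Finset.mem_Icc] at hx
          have hGx : G x = n := by
            rw [hmin x hx.1 (by omega), part3 x hx.1 hx.2]
          have hle : ∀ i ∈ Finset.Icc 1 (nu 1), famMult (R i) x ≤ (R i).card :=
            fun i _ => Finset.card_filter_le _ _
          have heq : ∀ i ∈ Finset.Icc 1 (nu 1), famMult (R i) x = (R i).card := by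
            refine (Finset.sum_eq_sum_iff_of_le hle).1 ?_
            rw [hsumcard, ← hGx, hG]
            rfl
          have hfi : (R i).filter (fun S => x ∈ S) = R i :=
            Finset.eq_of_subset_of_card_le (Finset.filter_subset _ _) (le_of_eq (heq i hi).symm)
          have : S ∈ (R i).filter (fun S => x ∈ S) := hfi.symm ▸ hS
          exact (Finset.mem_filter.1 this).2
        -- each set with a high element is determined
        have hdet : ∀ i ∈ Finset.Icc 1 (nu 1), ∀ S ∈ R i, ∀ x, m ≤ x → x ∈ S →
            S = insert x (Finset.Icc 1 (m - 1)) := by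
          intro i hi S hS x hxm hxS
          have hsub : insert x (Finset.Icc 1 (m - 1)) ⊆ S := by
            intro y hy
            rcases Finset.mem_insert.1 hy with h | h
            · exact h ▸ hxS
            · exact hbase i hi S hS h
          have hxnb : x ∉ Finset.Icc 1 (m - 1) := by simp only [Finset.mem_Icc]; omega
          have hcardi : (insert x (Finset.Icc 1 (m - 1))).card = m := by
            rw [Finset.card_insert_of_notMem hxnb, Nat.card_Icc]; omega
          exact (Finset.eq_of_subset_of_card_le hsub
            (by rw [hcardi, (hsize i hi S hS).1])).symm
        have hone : ∀ i ∈ Finset.Icc 1 (nu 1), ∀ x, m ≤ x → famMult (R i) x ≤ 1 := by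
          intro i hi x hxm
          unfold famMult
          rw [Finset.card_le_one]
          intro S hS S' hS'
          rw [Finset.mem_filter] at hS hS'
          rw [hdet i hi S hS.1 x hxm hS.2, hdet i hi S' hS'.1 x hxm hS'.2]
        -- per family bound on the interval
        have hIcard : (Finset.Icc m (m - 1 + t)).card = t := by rw [Nat.card_Icc]; omega
        have hCbound : ∀ i ∈ Finset.Icc 1 (nu 1),
            ∑ x ∈ Finset.Icc m (m - 1 + t), famMult (R i) x ≤ min (nuConj k nu i) t := by
          intro i hi
          refine le_min ?_ ?_
          · have hswap : ∑ x ∈ Finset.Icc m (m - 1 + t), famMult (R i) x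
                = ∑ S ∈ R i, ((Finset.Icc m (m - 1 + t)).filter (fun x => x ∈ S)).card := by
              unfold famMult
              rw [Finset.sum_congr rfl (fun x _ => Finset.card_filter _ _), Finset.sum_comm]
              exact Finset.sum_congr rfl (fun S _ => (Finset.card_filter _ _).symm)
            have hS1 : ∀ S ∈ R i,
                ((Finset.Icc m (m - 1 + t)).filter (fun x => x ∈ S)).card ≤ 1 := by
              intro S hS
              rw [Finset.card_le_one]
              intro x hx x' hx'
              rw [Finset.mem_filter, Finset.mem_Icc] at hx hx'
              have h1 := hdet i hi S hS x (by omega) hx.2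
              have h2 : x' ∈ insert x (Finset.Icc 1 (m - 1)) := h1 ▸ hx'.2
              rcases Finset.mem_insert.1 h2 with h | h
              · exact h.symm ▸ rfl
              · rw [Finset.mem_Icc] at h; omega
            calc ∑ x ∈ Finset.Icc m (m - 1 + t), famMult (R i) x
                = ∑ S ∈ R i, ((Finset.Icc m (m - 1 + t)).filter (fun x => x ∈ S)).card := hswap
              _ ≤ ∑ _S ∈ R i, 1 := Finset.sum_le_sum hS1
              _ = (R i).card := by rw [Finset.sum_const, smul_eq_mul, mul_one]
              _ = nuConj k nu i := hcard i hi
          · calc ∑ x ∈ Finset.Icc m (m - 1 + t), famMult (R i) x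
                ≤ ∑ _x ∈ Finset.Icc m (m - 1 + t), 1 := by
                  refine Finset.sum_le_sum (fun x hx => hone i hi x ?_)
                  rw [Finset.mem_Icc] at hx; exact hx.1
              _ = t := by rw [Finset.sum_const, hIcard, smul_eq_mul, mul_one]
        -- combine the bounds
        have hDE : ∑ x ∈ Finset.Icc m (m - 1 + t), G x ≤ ∑ s ∈ Finset.Icc 1 t, nu s := by
          have hsw : ∑ x ∈ Finset.Icc m (m - 1 + t), G x
              = ∑ i ∈ Finset.Icc 1 (nu 1), ∑ x ∈ Finset.Icc m (m - 1 + t), famMult (R i) x := by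
            rw [hG]
            unfold tupMultIcc
            rw [Finset.sum_comm]
          rw [hsw, ← conj_partial_sum hmono hzero t]
          exact Finset.sum_le_sum hCbound
        have hre : Finset.Icc m (m - 1 + t) = (Finset.Icc 1 t).image (fun s => m - 1 + s) := by
          ext x
          simp only [Finset.mem_Icc, Finset.mem_image]
          constructor
          · intro h
            exact ⟨x - (m - 1), ⟨by omega, by omega⟩, by omega⟩
          · rintro ⟨s, hs, rfl⟩
            omega
        rw [hre, Finset.sum_image (fun a _ b _ h => by omega)] at hDE
        have hGnu : ∀ s ∈ Finset.Icc 1 (t - 1), G (m - 1 + s) = nu s := by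
          intro s hs
          rw [Finset.mem_Icc] at hs
          rw [hmin (m - 1 + s) (by omega) (by omega), part4 s hs.1]
        have ht2 : t - 1 + 1 = t := by omega
        have e1 : ∑ s ∈ Finset.Icc 1 t, G (m - 1 + s)
            = (∑ s ∈ Finset.Icc 1 (t - 1), nu s) + G (m - 1 + t) := by
          rw [← ht2, Finset.sum_Icc_succ_top (by omega), ht2]
          rw [Finset.sum_congr rfl hGnu]
        have e2 : ∑ s ∈ Finset.Icc 1 t, nu s
            = (∑ s ∈ Finset.Icc 1 (t - 1), nu s) + nu t := by
          rw [← ht2, Finset.sum_Icc_succ_top (by omega), ht2]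
        rw [hj₀eq, part4 t ht1]
        omega
    omega
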